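/- Define sets of valid triples of length r: a triple (y, c₀, c₁) ∈ [2^r]³ is valid if there exist a₀, a₁ ∈ [2^r] with a₀ ≥₂ c₀, a₁ ≥₂ c₁, and a₀ + a₁ ≡ y (mod 2^r). Partition valid triples into noCarry(r) (every witness has a₀ + a₁ ≤ 2^r − 1), yesCarry(r) (every witness has a₀ + a₁ > 2^r − 1), and maybeCarry(r) (witnesses of both kinds exist). Then |noCarry(r+1)| = 3·|noCarry(r)|. -/

import Mathlib

open scoped Classical

/-- `Shadow2 n m` : every bit set in `n` is also set in `m` (i.e. `n ≤₂ m`). -/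
def Shadow2 (n m : ℕ) : Prop := ∀ i, n.testBit i = true → m.testBit i = true

/-- `(a₀, a₁)` is a witness for the validity of the triple `(y, c₀, c₁)` of
length `r`: `a₀, a₁ ∈ [2^r]`, `a₀ ≥₂ c₀`, `a₁ ≥₂ c₁`, and
`a₀ + a₁ ≡ y (mod 2^r)`. -/
def IsWitness (r y c₀ c₁ a₀ a₁ : ℕ) : Prop :=
  a₀ < 2 ^ r ∧ a₁ < 2 ^ r ∧ Shadow2 c₀ a₀ ∧ Shadow2 c₁ a₁ ∧ (a₀ + a₁) % 2 ^ r = y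

/-- All triples `(y, c₀, c₁) ∈ [2^r]³`. -/
def triples (r : ℕ) : Finset (ℕ × ℕ × ℕ) :=
  Finset.range (2 ^ r) ×ˢ Finset.range (2 ^ r) ×ˢ Finset.range (2 ^ r)

/-- Valid triples all of whose witnesses have `a₀ + a₁ ≤ 2^r - 1`. -/
noncomputable def noCarry (r : ℕ) : Finset (ℕ × ℕ × ℕ) :=
  (triples r).filter (fun v =>
    (∃ a₀ a₁, IsWitness r v.1 v.2.1 v.2.2 a₀ a₁) ∧
    ∀ a₀ a₁, IsWitness r v.1 v.2.1 v.2.2 a₀ a₁ → a₀ + a₁ ≤ 2 ^ r - 1)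

/-- Valid triples all of whose witnesses have `a₀ + a₁ > 2^r - 1`. -/
noncomputable def yesCarry (r : ℕ) : Finset (ℕ × ℕ × ℕ) :=
  (triples r).filter (fun v =>
    (∃ a₀ a₁, IsWitness r v.1 v.2.1 v.2.2 a₀ a₁) ∧
    ∀ a₀ a₁, IsWitness r v.1 v.2.1 v.2.2 a₀ a₁ → 2 ^ r - 1 < a₀ + a₁)

/-- Valid triples admitting witnesses of both kinds. -/
noncomputable def maybeCarry (r : ℕ) : Finset (ℕ × ℕ × ℕ) :=
  (triples r).filter (fun v =>
    (∃ a₀ a₁, IsWitness r v.1 v.2.1 v.2.2 a₀ a₁ ∧ a₀ + a₁ ≤ 2 ^ r - 1) ∧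
    (∃ a₀ a₁, IsWitness r v.1 v.2.1 v.2.2 a₀ a₁ ∧ 2 ^ r - 1 < a₀ + a₁))


section Aux

/-- If `d < 2^k` then anding `d` with `a` only sees `a`'s low `k` bits. -/
lemma my_and_mod {d : ℕ} (k a : ℕ) (hd : d < 2 ^ k) : d &&& a = d &&& (a % 2 ^ k) := by
  conv_lhs => rw [← Nat.and_two_pow_sub_one_of_lt_two_pow hd]
  rw [Nat.and_assoc, Nat.and_comm (2 ^ k - 1) a, Nat.and_two_pow_sub_one_eq_mod]

lemma my_top_and {r d a : ℕ} (hd : d < 2 ^ r) (ha : a < 2 ^ r) (h : d &&& a = 0) :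
    (2 ^ r + d) &&& a = 0 := by
  rw [Nat.and_comm, my_and_mod r (2 ^ r + d) ha, Nat.add_mod_left,
    Nat.mod_eq_of_lt hd, Nat.and_comm, h]

lemma my_add_eq_or : ∀ a b : ℕ, a &&& b = 0 → a + b = a ||| b := by
  intro a
  induction a using Nat.strong_induction_on with
  | _ a ih =>
    intro b h
    rcases Nat.eq_zero_or_pos a with rfl | ha
    · simp
    · have hd : a / 2 &&& b / 2 = 0 := by rw [← Nat.and_div_two, h]
      have ihe := ih (a / 2) (Nat.div_lt_self ha one_lt_two) (b / 2) hd
      have hmod : ¬(a % 2 = 1 ∧ b % 2 = 1) := by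
        intro hpq
        have := Nat.and_mod_two_eq_one.mpr hpq
        rw [h] at this; simp at this
      have hormod : (a ||| b) % 2 = 1 ↔ (a % 2 = 1 ∨ b % 2 = 1) := Nat.or_mod_two_eq_one
      have hor2 : (a ||| b) / 2 = a / 2 ||| b / 2 := Nat.or_div_two
      have e1 := Nat.div_add_mod a 2
      have e2 := Nat.div_add_mod b 2
      have e3 := Nat.div_add_mod (a ||| b) 2
      have m1 : a % 2 < 2 := Nat.mod_lt _ (by norm_num)
      have m2 : b % 2 < 2 := Nat.mod_lt _ (by norm_num)
      have m3 : (a ||| b) % 2 < 2 := Nat.mod_lt _ (by norm_num)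
      omega

lemma my_and_eq_zero : ∀ (r : ℕ) (a b : ℕ), a < 2 ^ r → b < 2 ^ r → a + b = 2 ^ r - 1 →
    a &&& b = 0 := by
  intro r
  induction r with
  | zero =>
    intro a b ha hb hs
    interval_cases a <;> interval_cases b <;> simp_all
  | succ r ih =>
    intro a b ha hb hs
    have hP : (0:ℕ) < 2 ^ r := Nat.pow_pos (by norm_num)
    have hpow : (2:ℕ) ^ (r + 1) = 2 * 2 ^ r := by ring
    have e1 := Nat.div_add_mod a 2
    have e2 := Nat.div_add_mod b 2
    have m1 : a % 2 < 2 := Nat.mod_lt _ (by norm_num)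
    have m2 : b % 2 < 2 := Nat.mod_lt _ (by norm_num)
    have hih : a / 2 &&& b / 2 = 0 := ih (a / 2) (b / 2) (by omega) (by omega) (by omega)
    have hmod : (a &&& b) % 2 = 0 := by
      rcases Nat.mod_two_eq_zero_or_one (a &&& b) with h | h
      · exact h
      · exfalso
        have := Nat.and_mod_two_eq_one.mp h
        omega
    have hdiv : (a &&& b) / 2 = 0 := by rw [Nat.and_div_two, hih]
    omega

/-- key construction: if the sum is strictly below `2^r - 1` we can add
disjoint increments summing to `2^r`. -/
lemma my_carry_construct : ∀ (r : ℕ) (a0 a1 : ℕ), a0 < 2 ^ r → a1 < 2 ^ r →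
    a0 + a1 + 1 < 2 ^ r →
    ∃ d0 d1, 0 < d0 ∧ 0 < d1 ∧ d0 + d1 = 2 ^ r ∧ d0 &&& a0 = 0 ∧ d1 &&& a1 = 0 := by
  intro r
  induction r with
  | zero => intro a0 a1 _ _ h; simp at h
  | succ r ih =>
    intro a0 a1 h0 h1 hy
    have hP : (0:ℕ) < 2 ^ r := Nat.pow_pos (by norm_num)
    have hpow : (2:ℕ) ^ (r + 1) = 2 * 2 ^ r := by ring
    have hand_pow : ∀ x : ℕ, x < 2 ^ r → 2 ^ r &&& x = 0 := by
      intro x hx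
      rw [Nat.and_comm, Nat.and_two_pow, Nat.testBit_lt_two_pow hx]
      simp
    by_cases hA : 2 ^ r ≤ a0
    · have h1' : a1 < 2 ^ r := by omega
      have ha0' : a0 % 2 ^ r = a0 - 2 ^ r := by
        rw [Nat.mod_eq_sub_mod hA, Nat.mod_eq_of_lt (by omega)]
      obtain ⟨d0, d1, hd0, hd1, hsum, hx0, hx1⟩ :=
        ih (a0 - 2 ^ r) a1 (by omega) h1' (by omega)
      refine ⟨d0, 2 ^ r + d1, hd0, by omega, by omega, ?_, my_top_and (by omega) h1' hx1⟩
      rw [my_and_mod r a0 (by omega), ha0', hx0]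
    · by_cases hB : 2 ^ r ≤ a1
      · have h0' : a0 < 2 ^ r := by omega
        have ha1' : a1 % 2 ^ r = a1 - 2 ^ r := by
          rw [Nat.mod_eq_sub_mod hB, Nat.mod_eq_of_lt (by omega)]
        obtain ⟨d0, d1, hd0, hd1, hsum, hx0, hx1⟩ :=
          ih a0 (a1 - 2 ^ r) h0' (by omega) (by omega)
        refine ⟨2 ^ r + d0, d1, by omega, hd1, by omega,
          my_top_and (by omega) h0' hx0, ?_⟩
        rw [my_and_mod r a1 (by omega), ha1', hx1]
      · by_cases hC : a0 + a1 + 1 < 2 ^ r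
        · obtain ⟨d0, d1, hd0, hd1, hsum, hx0, hx1⟩ := ih a0 a1 (by omega) (by omega) hC
          exact ⟨2 ^ r + d0, d1, by omega, hd1, by omega,
            my_top_and (by omega) (by omega) hx0, hx1⟩
        · exact ⟨2 ^ r, 2 ^ r, hP, hP, by omega,
            hand_pow a0 (by omega), hand_pow a1 (by omega)⟩

end Aux

lemma my_double_and (c0 c1 b0 b1 : ℕ) (hb0 : b0 < 2) (hb1 : b1 < 2) :
    (2 * c0 + b0) &&& (2 * c1 + b1) = 0 ↔ (c0 &&& c1 = 0 ∧ ¬(b0 = 1 ∧ b1 = 1)) := by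
  have hx2 : (2 * c0 + b0) / 2 = c0 := by omega
  have hxm : (2 * c0 + b0) % 2 = b0 := by omega
  have hy2 : (2 * c1 + b1) / 2 = c1 := by omega
  have hym : (2 * c1 + b1) % 2 = b1 := by omega
  have hdiv : ((2 * c0 + b0) &&& (2 * c1 + b1)) / 2 = c0 &&& c1 := by
    rw [Nat.and_div_two, hx2, hy2]
  have hmod1 : ((2 * c0 + b0) &&& (2 * c1 + b1)) % 2 = 1 ↔ (b0 = 1 ∧ b1 = 1) := by
    rw [Nat.and_mod_two_eq_one, hxm, hym]
  constructor
  · intro h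
    rw [h] at hdiv hmod1
    simp at hdiv hmod1
    exact ⟨hdiv.symm, by tauto⟩
  · rintro ⟨h1, h2⟩
    have e := Nat.div_add_mod ((2 * c0 + b0) &&& (2 * c1 + b1)) 2
    have hm0 : ((2 * c0 + b0) &&& (2 * c1 + b1)) % 2 = 0 := by
      rcases Nat.mod_two_eq_zero_or_one ((2 * c0 + b0) &&& (2 * c1 + b1)) with h | h
      · exact h
      · exact absurd (hmod1.mp h) h2
    rw [hdiv, h1] at e
    omega

/-- The key characterization of `noCarry`. -/
lemma noCarry_char (r : ℕ) (y c0 c1 : ℕ) :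
    (y, c0, c1) ∈ noCarry r ↔ y = 2 ^ r - 1 ∧ c0 < 2 ^ r ∧ c1 < 2 ^ r ∧ c0 &&& c1 = 0 := by
  have hP : (0:ℕ) < 2 ^ r := Nat.pow_pos (by norm_num)
  simp only [noCarry, triples, Finset.mem_filter, Finset.mem_product, Finset.mem_range]
  constructor
  · rintro ⟨⟨hy, hc0, hc1⟩, ⟨a0, a1, hw⟩, hall⟩
    obtain ⟨ha0, ha1, hs0, hs1, hmod⟩ := hw
    have hle := hall a0 a1 ⟨ha0, ha1, hs0, hs1, hmod⟩
    have hsum : a0 + a1 = y := by rw [← hmod, Nat.mod_eq_of_lt (by omega)]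
    have hY : y = 2 ^ r - 1 := by
      by_contra hne
      obtain ⟨d0, d1, hd0, hd1, hdsum, hx0, hx1⟩ :=
        my_carry_construct r a0 a1 ha0 ha1 (by omega)
      have e0 : a0 + d0 = a0 ||| d0 :=
        my_add_eq_or a0 d0 (by rw [Nat.and_comm]; exact hx0)
      have e1 : a1 + d1 = a1 ||| d1 :=
        my_add_eq_or a1 d1 (by rw [Nat.and_comm]; exact hx1)
      have w2 : IsWitness r y c0 c1 (a0 + d0) (a1 + d1) := by
        refine ⟨?_, ?_, ?_, ?_, ?_⟩
        · rw [e0]; exact Nat.or_lt_two_pow ha0 (by omega)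
        · rw [e1]; exact Nat.or_lt_two_pow ha1 (by omega)
        · intro i hi
          rw [e0, Nat.testBit_or, hs0 i hi]
          simp
        · intro i hi
          rw [e1, Nat.testBit_or, hs1 i hi]
          simp
        · have hrw : a0 + d0 + (a1 + d1) = (a0 + a1) + 2 ^ r := by omega
          rw [hrw, Nat.add_mod_right, hmod]
      have := hall _ _ w2
      omega
    refine ⟨hY, hc0, hc1, ?_⟩
    have haa : a0 &&& a1 = 0 := my_and_eq_zero r a0 a1 ha0 ha1 (by omega)
    refine Nat.zero_of_testBit_eq_false fun i => ?_
    rw [Nat.testBit_and]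
    cases hb0 : c0.testBit i with
    | false => simp
    | true =>
      cases hb1 : c1.testBit i with
      | false => simp
      | true =>
        exfalso
        have t0 := hs0 i hb0
        have t1 := hs1 i hb1
        have : (a0 &&& a1).testBit i = true := by rw [Nat.testBit_and, t0, t1]; rfl
        rw [haa] at this
        simp at this
  · rintro ⟨rfl, hc0, hc1, hcc⟩
    have hA : c0 &&& ((2 ^ r - 1) ^^^ c0) = 0 := by
      rw [Nat.and_xor_distrib_left, Nat.and_two_pow_sub_one_of_lt_two_pow hc0,
        Nat.and_self, Nat.xor_self]
    have hsum : c0 + ((2 ^ r - 1) ^^^ c0) = 2 ^ r - 1 := by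
      rw [my_add_eq_or _ _ hA]
      apply Nat.eq_of_testBit_eq
      intro i
      by_cases hi : i < r
      · cases hb : c0.testBit i <;>
          simp [Nat.testBit_or, Nat.testBit_xor, Nat.testBit_two_pow_sub_one, hi, hb]
      · have hb : c0.testBit i = false :=
          Nat.testBit_lt_two_pow
            (lt_of_lt_of_le hc0 (Nat.pow_le_pow_right (by norm_num) (by omega)))
        simp [Nat.testBit_or, Nat.testBit_xor, Nat.testBit_two_pow_sub_one, hi, hb]
    have ha1' : (2 ^ r - 1) ^^^ c0 < 2 ^ r := Nat.xor_lt_two_pow (by omega) hc0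
    refine ⟨⟨by omega, hc0, hc1⟩, ⟨c0, (2 ^ r - 1) ^^^ c0, ?_⟩, ?_⟩
    · refine ⟨hc0, ha1', fun i h => h, ?_, ?_⟩
      · intro i hi
        have hir : i < r := by
          have h1 := Nat.ge_two_pow_of_testBit hi
          by_contra h
          have : (2:ℕ) ^ r ≤ 2 ^ i := Nat.pow_le_pow_right (by norm_num) (by omega)
          omega
        have h0 : c0.testBit i = false := by
          have := congrArg (fun x => x.testBit i) hcc
          simp only [Nat.testBit_and, Nat.zero_testBit] at this
          cases hb : c0.testBit i
          · rfl
          · rw [hb, hi] at this; simp at this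
        simp [Nat.testBit_xor, Nat.testBit_two_pow_sub_one, hir, h0]
      · rw [hsum, Nat.mod_eq_of_lt (by omega)]
    · rintro a0 a1 ⟨ha0, ha1, _, _, hmod⟩
      by_cases h : a0 + a1 < 2 ^ r
      · rw [Nat.mod_eq_of_lt h] at hmod
        omega
      · rw [Nat.mod_eq_sub_mod (by omega), Nat.mod_eq_of_lt (by omega)] at hmod
        omega

theorem noCarry_recursion' (r : ℕ) :
    (noCarry (r + 1)).card = 3 * (noCarry r).card := by
  have hP : (0:ℕ) < 2 ^ r := Nat.pow_pos (by norm_num)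
  have hpow : (2:ℕ) ^ (r + 1) = 2 * 2 ^ r := by ring
  have key : (noCarry (r + 1)).card = ((Finset.range 3) ×ˢ noCarry r).card := by
    apply Finset.card_nbij'
      (i := fun v => (v.2.1 % 2 + 2 * (v.2.2 % 2), (v.1 / 2, v.2.1 / 2, v.2.2 / 2)))
      (j := fun p => (2 * p.2.1 + 1, 2 * p.2.2.1 + p.1 % 2, 2 * p.2.2.2 + p.1 / 2))
    · rintro ⟨Y, C0, C1⟩ hv
      obtain ⟨hY, hC0, hC1, hcc⟩ := (noCarry_char (r + 1) Y C0 C1).mp hv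
      have hnb : ¬(C0 % 2 = 1 ∧ C1 % 2 = 1) := by
        intro hpq
        have := Nat.and_mod_two_eq_one.mpr hpq
        rw [hcc] at this
        simp at this
      dsimp only
      rw [Finset.mem_coe, Finset.mem_product, Finset.mem_range]
      constructor
      · omega
      · rw [noCarry_char]
        refine ⟨by omega, by omega, by omega, ?_⟩
        rw [← Nat.and_div_two, hcc]
    · rintro ⟨t, y, c0, c1⟩ hp
      rw [Finset.mem_coe, Finset.mem_product, Finset.mem_range] at hp
      obtain ⟨ht, hm⟩ := hp
      obtain ⟨hy, hc0, hc1, hcc⟩ := (noCarry_char r y c0 c1).mp hm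
      dsimp only
      rw [Finset.mem_coe, noCarry_char]
      refine ⟨by omega, by omega, by omega, ?_⟩
      rw [my_double_and c0 c1 (t % 2) (t / 2) (by omega) (by omega)]
      exact ⟨hcc, by omega⟩
    · rintro ⟨Y, C0, C1⟩ hv
      obtain ⟨hY, hC0, hC1, hcc⟩ := (noCarry_char (r + 1) Y C0 C1).mp hv
      dsimp only
      simp only [Prod.mk.injEq]
      refine ⟨by omega, by omega, by omega⟩
    · rintro ⟨t, y, c0, c1⟩ hp
      rw [Finset.mem_coe, Finset.mem_product, Finset.mem_range] at hp
      obtain ⟨ht, hm⟩ := hp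
      dsimp only
      simp only [Prod.mk.injEq]
      refine ⟨by omega, by omega, by omega, by omega⟩
  rw [key, Finset.card_product, Finset.card_range]

/-- `|noCarry(r+1)| = 3 |noCarry(r)|`. -/
theorem noCarry_recursion (r : ℕ) :
    (noCarry (r + 1)).card = 3 * (noCarry r).card := noCarry_recursion' r
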